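/- Let R = K[x₁, …, xₙ] be a polynomial ring over a field K, let q ∈ R be irreducible, and let u ∈ R be not divisible by q. If f, g, h, j ∈ R satisfy f·g = q·h·j and f² + u·g² = q·(h² + u·j²), then f = g = h = j = 0. -/

import Mathlib

section aux

variable {R : Type*} [CommRing R] [IsDomain R]

/-- One descent step. -/
private lemma descent_step {q u f g h j : R} (hq : Prime q) (hu : ¬ q ∣ u)
    (h1 : f * g = q * h * j)
    (h2 : f ^ 2 + u * g ^ 2 = q * (h ^ 2 + u * j ^ 2)) :
    ∃ f' g', f = q * f' ∧ g = q * g' ∧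
      (h * j = q * f' * g') ∧
      (h ^ 2 + u * j ^ 2 = q * (f' ^ 2 + u * g' ^ 2)) := by
  have hq0 : q ≠ 0 := hq.ne_zero
  have hdvdfg : q ∣ f * g := ⟨h * j, by rw [h1]; ring⟩
  have hdvdsum : q ∣ f ^ 2 + u * g ^ 2 := ⟨h ^ 2 + u * j ^ 2, h2⟩
  have hqf : q ∣ f ∧ q ∣ g := by
    rcases hq.dvd_or_dvd hdvdfg with hf | hg
    · refine ⟨hf, ?_⟩
      have : q ∣ u * g ^ 2 := by
        have := dvd_sub hdvdsum (Dvd.dvd.mul_left (hf.pow two_ne_zero) 1)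
        simpa using this
      rcases hq.dvd_or_dvd this with h' | h'
      · exact absurd h' hu
      · exact hq.dvd_of_dvd_pow h'
    · refine ⟨?_, hg⟩
      have : q ∣ f ^ 2 := by
        have : q ∣ u * g ^ 2 := Dvd.dvd.mul_left (hg.pow two_ne_zero) u
        have := dvd_sub hdvdsum this
        simpa using this
      exact hq.dvd_of_dvd_pow this
  obtain ⟨⟨f', hf'⟩, ⟨g', hg'⟩⟩ := hqf
  refine ⟨f', g', hf', hg', ?_, ?_⟩
  · have : q * (h * j) = q * (q * f' * g') := by
      have h1' := h1; rw [hf', hg'] at h1'; linear_combination -h1'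
    exact mul_left_cancel₀ hq0 this
  · have : q * (h ^ 2 + u * j ^ 2) = q * (q * (f' ^ 2 + u * g' ^ 2)) := by
      have h2' := h2; rw [hf', hg'] at h2'; linear_combination -h2'
    exact mul_left_cancel₀ hq0 this

private lemma descent_pow_dvd {q u : R} (hq : Prime q) (hu : ¬ q ∣ u) :
    ∀ (k : ℕ) (f g h j : R), f * g = q * h * j →
      f ^ 2 + u * g ^ 2 = q * (h ^ 2 + u * j ^ 2) → q ^ k ∣ f := by
  intro k
  induction k with
  | zero => intro f g h j _ _; simp
  | succ k ih =>
    intro f g h j h1 h2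
    obtain ⟨f', g', hf, hg, h1', h2'⟩ := descent_step hq hu h1 h2
    have h1'' : h * j = q * f' * g' := h1'
    obtain ⟨h', j', hh, hj, h1''', h2'''⟩ := descent_step hq hu h1'' h2'
    have : q ^ k ∣ f' := ih f' g' h' j' h1''' h2'''
    rw [hf, pow_succ, mul_comm (q ^ k) q]
    exact mul_dvd_mul_left q this
end aux

/-- Infinite descent in a polynomial ring: if `q` is irreducible, `q ∤ u`, and
`f·g = q·h·j`, `f² + u·g² = q·(h² + u·j²)`, then `f = g = h = j = 0`. -/
theorem descent_in_polynomial_ring (K : Type*) [Field K] (n : ℕ)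
    (q u f g h j : MvPolynomial (Fin n) K)
    (hq : Irreducible q) (hu : ¬ q ∣ u)
    (h1 : f * g = q * h * j)
    (h2 : f ^ 2 + u * g ^ 2 = q * (h ^ 2 + u * j ^ 2)) :
    f = 0 ∧ g = 0 ∧ h = 0 ∧ j = 0 := by
  have hqp : Prime q := hq.prime
  have hu0 : u ≠ 0 := by rintro rfl; exact hu (dvd_zero q)
  -- the key: any first component of a solution is zero
  have key : ∀ f g h j : MvPolynomial (Fin n) K, f * g = q * h * j →
      f ^ 2 + u * g ^ 2 = q * (h ^ 2 + u * j ^ 2) → f = 0 := by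
    intro f g h j h1 h2
    by_contra hf0
    obtain ⟨m, hm⟩ := FiniteMultiplicity.of_prime_left hqp hf0
    exact hm (descent_pow_dvd hqp hu (m + 1) f g h j h1 h2)
  have hf : f = 0 := key f g h j h1 h2
  obtain ⟨f', g', hff', hgg', h1', h2'⟩ := descent_step hqp hu h1 h2
  have hh : h = 0 := key h j f' g' h1' h2'
  -- from h2 with f = h = 0 : u * g^2 = q * (u * j^2), so g^2 = q * j^2
  have hgj : g ^ 2 = q * j ^ 2 := by
    have : u * g ^ 2 = u * (q * j ^ 2) := by
      have := h2
      rw [hf, hh] at this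
      ring_nf at this ⊢
      linear_combination this
    exact mul_left_cancel₀ hu0 this
  have hg : g = 0 := by
    refine key g g j j ?_ ?_
    · rw [← sq, hgj]; ring
    · rw [hgj]; ring
  have hj : j = 0 := by
    have : q * j ^ 2 = 0 := by rw [← hgj, hg]; ring
    rcases mul_eq_zero.mp this with h' | h'
    · exact absurd h' hqp.ne_zero
    · exact pow_eq_zero_iff two_ne_zero |>.mp h'
  exact ⟨hf, hg, hh, hj⟩
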